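/- Let X be a real Banach space, κ an uncountable regular cardinal, Y ⊆ X a nontrivial closed subspace whose density character is less than κ, and {Z_α}_{α<κ} a decreasing sequence of closed linear subspaces of X with ⋂_{α<κ}Z_α = {0}. Suppose that ⋂_{α<κ} cl(B_X + Z_α) ⊆ r·B_X for some real r with 1 ≤ r < ∞, where B_X is the closed unit ball and cl denotes norm closure. Then sup_{β<κ} dist(S_Y, Z_β) ≥ 1/r; that is, for every ε > 0 there exists β < κ such that dist(S_Y, Z_β) > 1/r − ε. -/

import Mathlib

open Cardinal Ordinal Set Pointwise

universe u

/-- density character: least cardinality of a dense subset (at least `ℵ₀`). -/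
noncomputable def densChar (Y : Type u) [TopologicalSpace Y] : Cardinal.{u} :=
  max ℵ₀ (sInf {c : Cardinal.{u} | ∃ s : Set Y, Dense s ∧ #s = c})

theorem stmt8 {X : Type u} [NormedAddCommGroup X] [NormedSpace ℝ X] [CompleteSpace X]
    (κ : Cardinal.{u}) (hreg : κ.IsRegular) (hunc : ℵ₀ < κ)
    (Y : Submodule ℝ X) (hYclosed : IsClosed (Y : Set X)) (hYne : Y ≠ ⊥)
    (hYdens : densChar ↥Y < κ)
    (Z : Ordinal.{u} → Submodule ℝ X)
    (hZclosed : ∀ α < κ.ord, IsClosed ((Z α : Set X)))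
    (hZdec : ∀ α β, α ≤ β → β < κ.ord → Z β ≤ Z α)
    (hZint : (⋂ α ∈ Set.Iio κ.ord, (Z α : Set X)) = {0})
    (r : ℝ) (hr : 1 ≤ r)
    (hrB : (⋂ α ∈ Set.Iio κ.ord, closure (Metric.closedBall (0:X) 1 + (Z α : Set X))) ⊆
      Metric.closedBall (0:X) r) :
    ∀ ε > (0:ℝ), ∃ β < κ.ord, ∀ y ∈ Y, ‖y‖ = 1 → ∀ z ∈ Z β, 1 / r - ε < ‖y - z‖ := by
  intro ε hε
  have hr0 : (0:ℝ) < r := lt_of_lt_of_le one_pos hr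
  have h1r : (0:ℝ) < 1 / r := by positivity
  -- reduce to a small ε'
  set ε' : ℝ := min ε (1 / (2 * r)) with hε'def
  have hε'pos : 0 < ε' := lt_min hε (by positivity)
  have hε'le : ε' ≤ ε := min_le_left _ _
  have hε'r : ε' ≤ 1 / (2 * r) := min_le_right _ _
  suffices h : ∃ β < κ.ord, ∀ y ∈ Y, ‖y‖ = 1 → ∀ z ∈ Z β, 1 / r - ε' < ‖y - z‖ by
    obtain ⟨β, hβ, h⟩ := h
    exact ⟨β, hβ, fun y hy hny z hz => lt_of_le_of_lt (by linarith) (h y hy hny z hz)⟩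
  by_contra hcon
  push_neg at hcon
  have H : ∀ β : Set.Iio κ.ord, ∃ y, y ∈ Y ∧ ‖y‖ = 1 ∧
      ∃ z, z ∈ Z β ∧ ‖y - z‖ ≤ 1 / r - ε' := by
    intro β
    obtain ⟨y, hy, hny, z, hz, hyz⟩ := hcon β β.2
    exact ⟨y, hy, hny, z, hz, hyz⟩
  choose y hyY hy1 z hzZ hyz using H
  -- a dense set of small cardinality in Y
  have hTne : {c : Cardinal.{u} | ∃ s : Set ↥Y, Dense s ∧ #s = c}.Nonempty :=
    ⟨#(Set.univ : Set ↥Y), Set.univ, dense_univ, rfl⟩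
  have hsinf : sInf {c : Cardinal.{u} | ∃ s : Set ↥Y, Dense s ∧ #s = c} < κ :=
    lt_of_le_of_lt (le_max_right _ _) hYdens
  obtain ⟨s, hsdense, hscard⟩ := csInf_mem hTne
  have hslt : #s < κ := by rw [hscard]; exact hsinf
  -- approximate each y β by an element of s
  have hd : ∀ β : Set.Iio κ.ord, ∃ d ∈ s, dist (⟨y β, hyY β⟩ : ↥Y) d < ε' / 4 :=
    fun β => hsdense.exists_dist_lt _ (by positivity)
  choose d hds hdd using hd
  -- pigeonhole: some element of s is used unboundedly often
  have key : ∃ d0 : ↥s, ∀ α : Ordinal, α < κ.ord →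
      ∃ γ : Set.Iio κ.ord, α ≤ (γ : Ordinal) ∧ d γ = (d0 : ↥Y) := by
    by_contra h
    push_neg at h
    choose α hα1 hα2 using h
    have hsup : (⨆ d0 : ↥s, α d0) < κ.ord :=
      Cardinal.iSup_lt_ord_of_isRegular hreg hslt hα1
    set γ : Set.Iio κ.ord := ⟨_, hsup⟩
    have hle : α ⟨d γ, hds γ⟩ ≤ (γ : Ordinal) := Ordinal.le_iSup α _
    exact hα2 ⟨d γ, hds γ⟩ γ hle rfl
  obtain ⟨d0, hd0⟩ := key
  set yd : X := ((d0 : ↥Y) : X) with hyddef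
  -- yd is close to unit vectors
  have hclose : ∀ γ : Set.Iio κ.ord, d γ = (d0 : ↥Y) → ‖y γ - yd‖ < ε' / 4 := by
    intro γ hγ
    have := hdd γ
    rw [hγ, Subtype.dist_eq] at this
    simpa [dist_eq_norm] using this
  have hydnorm : 1 - ε' / 4 < ‖yd‖ := by
    obtain ⟨γ, _, hγ⟩ := hd0 0 (by
      rw [pos_iff_ne_zero, ne_eq, Cardinal.ord_eq_zero]
      exact hreg.pos.ne')
    have h1 := hclose γ hγ
    have h2 : ‖y γ‖ - ‖y γ - yd‖ ≤ ‖yd‖ := by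
      linarith [norm_sub_norm_le (y γ) yd]
    rw [hy1 γ] at h2
    linarith
  set c : ℝ := 1 / r - 3 * ε' / 4 with hcdef
  have hc : 0 < c := by
    have : 3 * ε' / 4 < 1 / r := by
      have h2 : 1 / (2 * r) = (1 / r) / 2 := by rw [one_div, one_div, mul_inv, div_eq_mul_inv]; ring
      rw [h2] at hε'r
      linarith
    simpa [hcdef] using sub_pos.mpr this
  -- the scaled vector is in every closure(B + Z α)
  have hmem : ∀ α ∈ Set.Iio κ.ord,
      c⁻¹ • yd ∈ closure (Metric.closedBall (0:X) 1 + (Z α : Set X)) := by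
    intro α hα
    obtain ⟨γ, hγge, hγd⟩ := hd0 α hα
    have hzα : z γ ∈ Z α := hZdec α γ hγge γ.2 (hzZ γ)
    have hnear : ‖yd - z γ‖ ≤ c := by
      have h1 : ‖yd - z γ‖ ≤ ‖yd - y γ‖ + ‖y γ - z γ‖ := norm_sub_le_norm_sub_add_norm_sub _ _ _
      have h2 : ‖yd - y γ‖ < ε' / 4 := by
        rw [norm_sub_rev]; exact hclose γ hγd
      have h3 := hyz γ
      rw [hcdef]; linarith
    apply subset_closure
    have hsplit : c⁻¹ • yd = c⁻¹ • (yd - z γ) + c⁻¹ • (z γ) := by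
      rw [← smul_add]; congr 1; abel
    rw [hsplit]
    apply Set.add_mem_add
    · rw [Metric.mem_closedBall, dist_zero_right, norm_smul, norm_inv,
        Real.norm_of_nonneg hc.le]
      rw [inv_mul_le_iff₀ hc]
      linarith
    · exact Submodule.smul_mem _ _ hzα
  have hball : c⁻¹ • yd ∈ Metric.closedBall (0:X) r := by
    apply hrB
    exact Set.mem_iInter₂.mpr hmem
  rw [Metric.mem_closedBall, dist_zero_right, norm_smul, norm_inv,
    Real.norm_of_nonneg hc.le, inv_mul_le_iff₀ hc] at hball
  -- derive the contradiction
  have hrc : c * r = 1 - 3 * r * ε' / 4 := by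
    rw [hcdef]; field_simp
  rw [hrc] at hball
  nlinarith [hε'pos, hr, hydnorm, mul_le_mul_of_nonneg_right hr (le_of_lt hε'pos)]
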